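/- Given integers d ≥ 2, n ≥ 1 and N ≥ 1 with 3(d−1)N/2 ≤ n/d + d − 2, write n − d(d−1)N/2 = dq + r with integers q ≥ 0 and 0 ≤ r ≤ d−1, and set A_i := q + (d−i)N + [i ≤ r] for 1 ≤ i ≤ d−1. For each ᾱ ∈ {0,1,…,N−1}^{d−1}, the tuple α(ᾱ) ∈ ℤ^d defined by α(ᾱ)_i := A_i + ᾱ_i for 1 ≤ i ≤ d−1 and α(ᾱ)_d := n − Σ_{i=1}^{d−1} α(ᾱ)_i satisfies α(ᾱ)_1 > α(ᾱ)_2 > … > α(ᾱ)_d ≥ 0; in particular α(ᾱ) ∈ Y(d,n). Moreover the map ᾱ ↦ α(ᾱ) is injective, so its image S_Young has exactly N^{d−1} elements. -/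

import Mathlib

open scoped Classical

noncomputable section

/-- The set `Y(d,n)` of Young diagrams: tuples `α ∈ ℤ^d` with
`α 1 ≥ ⋯ ≥ α d ≥ 0` and `∑ i, α i = n`. -/
def Ydn (d n : ℕ) : Finset (Fin d → ℤ) :=
  (Fintype.piFinset fun _ => Finset.Icc (0 : ℤ) (n : ℤ)).filter
    (fun α => (∀ i j : Fin d, i ≤ j → α j ≤ α i) ∧ (∀ i, 0 ≤ α i) ∧ (∑ i, α i) = (n : ℤ))

/-- `A_i = q + (d - i) N + [i ≤ r]` for the 1-based index `i`; here the argument `i`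
is 0-based, so the 1-based index is `i + 1`. -/
def Ai (d N : ℕ) (q r : ℤ) (i : ℕ) : ℤ :=
  q + ((d : ℤ) - ((i : ℤ) + 1)) * (N : ℤ) + (if (i : ℤ) + 1 ≤ r then 1 else 0)

/-- The map `ᾱ ↦ α(ᾱ)` of the `S_Young` construction: `α(ᾱ)_i = A_i + ᾱ_i` for
`i ≤ d - 1` (1-based) and `α(ᾱ)_d = n - ∑_{i<d} α(ᾱ)_i`. -/
def alphaMap (d n N : ℕ) (q r : ℤ) (bar : Fin (d - 1) → ℤ) : Fin d → ℤ :=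
  fun i => if h : (i : ℕ) < d - 1 then Ai d N q r i + bar ⟨i, h⟩
           else (n : ℤ) - ∑ j : Fin (d - 1), (Ai d N q r j + bar j)

/-- The index set `{0, 1, …, N-1}^{d-1}`. -/
def barSet (d N : ℕ) : Finset (Fin (d - 1) → ℤ) :=
  Fintype.piFinset fun _ => Finset.Icc (0 : ℤ) ((N : ℤ) - 1)


lemma sum_indicator (e : ℕ) (r : ℤ) (h0 : 0 ≤ r) (h1 : r ≤ e) :
    ∑ j ∈ Finset.range e, (if (j:ℤ)+1 ≤ r then (1:ℤ) else 0) = r := by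
  induction e generalizing r with
  | zero => simp at h1 ⊢; omega
  | succ e ih =>
    rw [Finset.sum_range_succ]
    rcases le_or_gt r e with h | h
    · rw [ih r h0 h]
      have : ¬ ((e:ℤ)+1 ≤ r) := by omega
      simp [this]
    · have hre : r = (e:ℤ) + 1 := by push_cast at h1 ⊢; omega
      have : ∀ j ∈ Finset.range e, (if (j:ℤ)+1 ≤ r then (1:ℤ) else 0) = 1 := by
        intro j hj
        simp only [Finset.mem_range] at hj
        have : (j:ℤ) + 1 ≤ r := by omega
        simp [this]
      rw [Finset.sum_congr rfl this, Finset.sum_const, Finset.card_range]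
      have : ((e:ℤ)+1 ≤ r) := by omega
      simp [this, hre]

lemma sum_lin (e : ℕ) : 2 * ∑ j ∈ Finset.range e, ((e:ℤ) - (j:ℤ)) = e * (e+1) := by
  induction e with
  | zero => simp
  | succ e ih =>
    rw [Finset.sum_range_succ]
    have : ∑ j ∈ Finset.range e, ((e:ℤ)+1 - (j:ℤ)) = ∑ j ∈ Finset.range e, (((e:ℤ) - j) + 1) := by
      apply Finset.sum_congr rfl; intro j _; ring
    push_cast
    rw [this, Finset.sum_add_distrib, Finset.sum_const, Finset.card_range]
    ring_nf
    ring_nf at ih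
    linarith

lemma sum_Ai (e N : ℕ) (q r : ℤ) (hr0 : 0 ≤ r) (hr1 : r ≤ (e:ℤ)) :
    2 * ∑ j : Fin e, Ai (e+1) N q r (j:ℕ) = 2*((e:ℤ)*q + r) + (e:ℤ)*((e:ℤ)+1)*(N:ℤ) := by
  rw [Fin.sum_univ_eq_sum_range]
  have hc : ∀ j ∈ Finset.range e, Ai (e+1) N q r j
      = q + ((e:ℤ) - j)*(N:ℤ) + (if (j:ℤ)+1 ≤ r then (1:ℤ) else 0) := by
    intro j _; unfold Ai; push_cast; ring
  rw [Finset.sum_congr rfl hc, Finset.sum_add_distrib, Finset.sum_add_distrib,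
    Finset.sum_const, Finset.card_range, ← Finset.sum_mul,
    sum_indicator e r hr0 hr1]
  have h1 := sum_lin e
  simp only [nsmul_eq_mul]
  linear_combination (N:ℤ) * h1


set_option maxHeartbeats 1000000 in
/-- The `S_Young` construction produces strictly decreasing nonnegative Young diagrams
in `Y(d,n)`, the map `ᾱ ↦ α(ᾱ)` is injective, and its image has `N^(d-1)` elements. -/
theorem stmt6 (d n N : ℕ) (hd : 2 ≤ d) (hn : 1 ≤ n) (hN : 1 ≤ N)
    (h1 : 3 * ((d : ℝ) - 1) * (N : ℝ) / 2 ≤ (n : ℝ) / (d : ℝ) + (d : ℝ) - 2)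
    (q r : ℤ) (hq : 0 ≤ q) (hr0 : 0 ≤ r) (hr1 : r ≤ (d : ℤ) - 1)
    (hqr : 2 * (n : ℤ) = (d : ℤ) * ((d : ℤ) - 1) * (N : ℤ) + 2 * ((d : ℤ) * q + r)) :
    (∀ bar ∈ barSet d N,
        (∀ i j : Fin d, i < j → alphaMap d n N q r bar j < alphaMap d n N q r bar i) ∧
        (∀ i : Fin d, 0 ≤ alphaMap d n N q r bar i) ∧
        alphaMap d n N q r bar ∈ Ydn d n) ∧
      Set.InjOn (alphaMap d n N q r) (barSet d N : Set (Fin (d - 1) → ℤ)) ∧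
      ((barSet d N).image (alphaMap d n N q r)).card = N ^ (d - 1) := by
  obtain ⟨e, rfl⟩ : ∃ e, d = e + 1 := ⟨d - 1, by omega⟩
  have he : 1 ≤ e := by omega
  -- from h1 : integer inequality
  have hd0 : (0:ℝ) < ((e:ℝ) + 1) := by positivity
  have hne : ((e:ℝ)+1) ≠ 0 := ne_of_gt hd0
  have hreal : 3 * ((e:ℝ)+1) * (e:ℝ) * (N:ℝ) ≤ 2*(n:ℝ) + 2*((e:ℝ)+1)*((e:ℝ)-1) := by
    have h1' : 3*(e:ℝ)*(N:ℝ)/2 ≤ (n:ℝ)/((e:ℝ)+1) + ((e:ℝ)+1) - 2 := by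
      push_cast at h1 ⊢; linarith
    have h3 := mul_le_mul_of_nonneg_right h1' hd0.le
    have hcancel : (n:ℝ)/((e:ℝ)+1) * ((e:ℝ)+1) = (n:ℝ) := div_mul_cancel₀ _ hne
    nlinarith [h3, hcancel]
  have hZ : 3 * ((e:ℤ)+1) * (e:ℤ) * (N:ℤ) ≤ 2*(n:ℤ) + 2*((e:ℤ)+1)*((e:ℤ)-1) := by
    exact_mod_cast hreal
  -- q lower bound
  have hqlb : (e:ℤ) * ((N:ℤ) - 1) ≤ q := by
    push_cast at hqr hr1
    nlinarith [hZ, hqr, hr1, hr0, hq, (by exact_mod_cast he : (1:ℤ) ≤ (e:ℤ))]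
  -- value at castSucc
  have hcast : ∀ (bar : Fin (e+1-1) → ℤ) (i : Fin e),
      alphaMap (e+1) n N q r bar (Fin.castSucc i) = Ai (e+1) N q r (i:ℕ) + bar i := by
    intro bar i
    have h : ((Fin.castSucc i : Fin (e+1)) : ℕ) < (e+1) - 1 := by
      simpa using i.isLt
    simp only [alphaMap, dif_pos h]
    rfl
  -- value at last
  have hre : r ≤ (e:ℤ) := by push_cast at hr1; omega
  have hlastv : ∀ (bar : Fin (e+1-1) → ℤ),
      alphaMap (e+1) n N q r bar (Fin.last e) = q - ∑ j, bar j := by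
    intro bar
    have h0 : alphaMap (e+1) n N q r bar (Fin.last e)
        = (n:ℤ) - ∑ j : Fin e, (Ai (e+1) N q r (j:ℕ) + bar j) := by
      simp [alphaMap]
    have hbb : (∑ j : Fin (e+1-1), bar j) = ∑ x : Fin e, bar x := rfl
    rw [h0, Finset.sum_add_distrib, hbb]
    have hs := sum_Ai e N q r hr0 hre
    push_cast at hqr
    linarith
  -- bar bounds
  have hbarmem : ∀ bar ∈ barSet (e+1) N, ∀ j : Fin e, 0 ≤ bar j ∧ bar j ≤ (N:ℤ) - 1 := by
    intro bar hbar j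
    have := (Fintype.mem_piFinset.mp hbar) j
    simpa [Finset.mem_Icc] using this
  have hsumbar : ∀ bar ∈ barSet (e+1) N,
      0 ≤ ∑ j, bar j ∧ (∑ j, bar j) ≤ (e:ℤ)*((N:ℤ)-1) := by
    intro bar hbar
    constructor
    · exact Finset.sum_nonneg fun j _ => (hbarmem bar hbar j).1
    · calc (∑ j, bar j) ≤ ∑ _j : Fin e, ((N:ℤ)-1) :=
            Finset.sum_le_sum fun j _ => (hbarmem bar hbar j).2
        _ = (e:ℤ)*((N:ℤ)-1) := by
            simp [Finset.sum_const, mul_comm]; ring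
  -- strict antitonicity
  have hanti : ∀ bar ∈ barSet (e+1) N, StrictAnti (alphaMap (e+1) n N q r bar) := by
    intro bar hbar
    rw [Fin.strictAnti_iff_succ_lt]
    intro i
    rcases lt_or_eq_of_le (Nat.succ_le_of_lt i.isLt) with h | h
    · -- i+1 < e : both in the first segment
      have hsucc : alphaMap (e+1) n N q r bar i.succ
          = Ai (e+1) N q r ((i:ℕ)+1) + bar ⟨(i:ℕ)+1, h⟩ := by
        have h' : ((i.succ : Fin (e+1)) : ℕ) < (e+1) - 1 := by simpa using h
        simp only [alphaMap, dif_pos h']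
        rfl
      rw [hcast bar i, hsucc]
      have hA : (N:ℤ) ≤ Ai (e+1) N q r (i:ℕ) - Ai (e+1) N q r ((i:ℕ)+1) := by
        have hval : ∀ k : ℕ, Ai (e+1) N q r k
            = q + ((e:ℤ) - (k:ℤ))*(N:ℤ) + (if (k:ℤ)+1 ≤ r then (1:ℤ) else 0) := by
          intro k; unfold Ai; push_cast; ring
        rw [hval (i:ℕ), hval ((i:ℕ)+1)]
        push_cast
        have hind : (if ((i:ℕ):ℤ)+1+1 ≤ r then (1:ℤ) else 0)
            ≤ (if ((i:ℕ):ℤ)+1 ≤ r then (1:ℤ) else 0) := by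
          split_ifs <;> omega
        push_cast at hind
        nlinarith [hind]
      have hb1 := hbarmem bar hbar i
      have hb2 := hbarmem bar hbar ⟨(i:ℕ)+1, h⟩
      have hN' : (1:ℤ) ≤ (N:ℤ) := by exact_mod_cast hN
      linarith [hA, hb1.1, hb1.2, hb2.1, hb2.2]
    · -- i+1 = e : compare with the last entry
      have hsucc : i.succ = Fin.last e := by
        apply Fin.ext; simpa using h
      rw [hcast bar i, hsucc, hlastv bar]
      have hco : ((e+1:ℕ):ℤ) - (((i:ℕ):ℤ)+1) = 1 := by push_cast; omega
      have hAi : Ai (e+1) N q r (i:ℕ)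
          = q + (N:ℤ) + (if ((i:ℕ):ℤ)+1 ≤ r then (1:ℤ) else 0) := by
        unfold Ai; rw [hco, one_mul]
      have hind : (0:ℤ) ≤ (if ((i:ℕ):ℤ)+1 ≤ r then (1:ℤ) else 0) := by positivity
      have hb1 := hbarmem bar hbar i
      have hsb := hsumbar bar hbar
      have hN' : (1:ℤ) ≤ (N:ℤ) := by exact_mod_cast hN
      rw [hAi]
      linarith [hsb.1, hb1.1]
  -- nonnegativity
  have hnonneg : ∀ bar ∈ barSet (e+1) N, ∀ i : Fin (e+1),
      0 ≤ alphaMap (e+1) n N q r bar i := by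
    intro bar hbar i
    have hlastpos : 0 ≤ alphaMap (e+1) n N q r bar (Fin.last e) := by
      rw [hlastv bar]
      have hsb := hsumbar bar hbar
      linarith [hsb.2, hqlb]
    have := (hanti bar hbar).antitone (Fin.le_last i)
    linarith
  -- sum = n
  have hsum : ∀ (bar : Fin (e+1-1) → ℤ),
      ∑ i, alphaMap (e+1) n N q r bar i = (n:ℤ) := by
    intro bar
    rw [Fin.sum_univ_castSucc]
    have : ∑ i : Fin e, alphaMap (e+1) n N q r bar (Fin.castSucc i)
        = ∑ i : Fin e, (Ai (e+1) N q r (i:ℕ) + bar i) :=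
      Finset.sum_congr rfl fun i _ => hcast bar i
    rw [this]
    have h0 : alphaMap (e+1) n N q r bar (Fin.last e)
        = (n:ℤ) - ∑ j : Fin e, (Ai (e+1) N q r (j:ℕ) + bar j) := by
      simp [alphaMap]
    rw [h0]; ring
  -- membership in Ydn
  have hmem : ∀ bar ∈ barSet (e+1) N, alphaMap (e+1) n N q r bar ∈ Ydn (e+1) n := by
    intro bar hbar
    rw [Ydn, Finset.mem_filter]
    refine ⟨?_, ?_, fun i => hnonneg bar hbar i, hsum bar⟩
    · rw [Fintype.mem_piFinset]
      intro i
      rw [Finset.mem_Icc]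
      refine ⟨hnonneg bar hbar i, ?_⟩
      have hle := Finset.single_le_sum (f := alphaMap (e+1) n N q r bar)
        (fun j _ => hnonneg bar hbar j) (Finset.mem_univ i)
      rw [hsum bar] at hle
      exact hle
    · intro i j hij
      rcases lt_or_eq_of_le hij with h | h
      · exact le_of_lt ((hanti bar hbar) h)
      · rw [h]
  -- injectivity
  have hinj : Set.InjOn (alphaMap (e+1) n N q r)
      ((barSet (e+1) N : Set (Fin (e+1-1) → ℤ))) := by
    intro b1 _ b2 _ heq
    funext j
    have hj := congrFun heq (Fin.castSucc j)
    rw [hcast b1 j, hcast b2 j] at hj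
    omega
  refine ⟨fun bar hbar => ⟨fun i j hij => (hanti bar hbar) hij, hnonneg bar hbar, hmem bar hbar⟩,
    hinj, ?_⟩
  rw [Finset.card_image_of_injOn hinj]
  rw [barSet, Fintype.card_piFinset]
  have hN' : (1:ℤ) ≤ (N:ℤ) := by exact_mod_cast hN
  simp [Int.card_Icc]
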